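/- In any snake graph, the set of boundary edges decomposes as the disjoint union of two perfect matchings: the minimal perfect matching P_min and the maximal perfect matching P_max; in particular P_min ∪ P_max is the set of all boundary edges and P_min ∩ P_max = ∅. -/

import Mathlib

/-- A position in the integer grid; tiles are unit squares with a given south-west corner. -/
abbrev Pos : Type := ℤ × ℤ

/-- An edge of the grid: a base vertex together with a direction
(`true` = horizontal edge to the east, `false` = vertical edge to the north). -/
abbrev SEdge : Type := Pos × Bool

/-- The two endpoints of an edge. -/
def edgeVerts (e : SEdge) : Finset Pos :=
  {e.1, if e.2 then (e.1.1 + 1, e.1.2) else (e.1.1, e.1.2 + 1)}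

/-- The four edges of the unit-square tile whose south-west corner is `p`:
bottom, left, right and top edges. -/
def tileEdges (p : Pos) : Finset SEdge :=
  {(p, true), (p, false), ((p.1 + 1, p.2), false), ((p.1, p.2 + 1), true)}

/-- The four vertices of the tile with south-west corner `p`. -/
def tileVerts (p : Pos) : Finset Pos := (tileEdges p).biUnion edgeVerts

/-- The list of south-west corners of the tiles of a snake graph built from gluing data `g`
(`true` = the next tile is glued to the right edge, `false` = glued to the top edge),
starting at position `p`. -/
def tilePosFrom : List Bool → Pos → List Pos
  | [], p => [p]
  | b :: g, p => p :: tilePosFrom g (if b then (p.1 + 1, p.2) else (p.1, p.2 + 1))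

/-- The tiles of the snake graph with gluing data `g`; a snake graph with `n + 1` tiles
corresponds to `g` of length `n`. -/
def snakeTiles (g : List Bool) : List Pos := tilePosFrom g (0, 0)

/-- The edge set of the snake graph with gluing data `g`. -/
def snakeEdges (g : List Bool) : Finset SEdge :=
  (snakeTiles g).toFinset.biUnion tileEdges

/-- The vertex set of the snake graph with gluing data `g`. -/
def snakeVerts (g : List Bool) : Finset Pos := (snakeEdges g).biUnion edgeVerts

/-- `P` is a perfect matching of the graph with edge set `E`: a subset of the edges such
that every vertex is incident to exactly one edge of `P`. -/
def IsPM (E P : Finset SEdge) : Prop :=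
  P ⊆ E ∧ ∀ v ∈ E.biUnion edgeVerts, ∃! e, e ∈ P ∧ v ∈ edgeVerts e

/-- The boundary edges of the snake graph: edges lying in exactly one tile. -/
def boundary (g : List Bool) : Finset SEdge :=
  (snakeEdges g).filter
    (fun e => (snakeTiles g).countP (fun p => decide (e ∈ tileEdges p)) = 1)

/-- `P` is the minimal perfect matching of the snake graph with gluing data `g`:
the perfect matching consisting only of boundary edges which contains the bottom
edge of the first tile. -/
def IsMinPM (g : List Bool) (P : Finset SEdge) : Prop :=
  IsPM (snakeEdges g) P ∧ P ⊆ boundary g ∧ (((0 : ℤ), (0 : ℤ)), true) ∈ P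

-- mine
def stepP (b : Bool) (p : Pos) : Pos := if b then (p.1 + 1, p.2) else (p.1, p.2 + 1)

lemma tilePosFrom_cons (b : Bool) (g : List Bool) (p : Pos) :
    tilePosFrom (b :: g) p = p :: tilePosFrom g (stepP b p) := rfl

lemma mem_tileEdges {e : SEdge} {q : Pos} :
    e ∈ tileEdges q ↔
      (e.2 = true ∧ e.1.1 = q.1 ∧ (e.1.2 = q.2 ∨ e.1.2 = q.2 + 1)) ∨
      (e.2 = false ∧ (e.1.1 = q.1 ∨ e.1.1 = q.1 + 1) ∧ e.1.2 = q.2) := by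
  obtain ⟨⟨x, y⟩, t⟩ := e
  cases t <;> simp [tileEdges, Prod.ext_iff] <;> tauto

lemma mem_edgeVerts {v : Pos} {e : SEdge} :
    v ∈ edgeVerts e ↔
      (v = e.1) ∨ (e.2 = true ∧ v.1 = e.1.1 + 1 ∧ v.2 = e.1.2) ∨
      (e.2 = false ∧ v.1 = e.1.1 ∧ v.2 = e.1.2 + 1) := by
  obtain ⟨⟨x, y⟩, t⟩ := e
  cases t <;> simp [edgeVerts, Prod.ext_iff] <;> tauto

lemma tilePos_mono : ∀ (g : List Bool) (p q : Pos), q ∈ tilePosFrom g p →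
    p.1 ≤ q.1 ∧ p.2 ≤ q.2
  | [], p, q, h => by simp [tilePosFrom] at h; simp [h]
  | b :: g, p, q, h => by
    rw [tilePosFrom_cons, List.mem_cons] at h
    rcases h with h | h
    · simp [h]
    · have := tilePos_mono g _ q h
      cases b <;> simp [stepP] at this <;> omega

lemma count_self_tilePos : ∀ (g : List Bool) (p : Pos),
    List.countP (fun q => decide (q = p)) (tilePosFrom g p) = 1
  | [], p => by simp [tilePosFrom]
  | b :: g, p => by
    rw [tilePosFrom_cons, List.countP_cons]
    have h0 : List.countP (fun q => decide (q = p)) (tilePosFrom g (stepP b p)) = 0 := by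
      rw [List.countP_eq_zero]
      intro q hq
      have := tilePos_mono g _ q hq
      cases b <;> simp [stepP] at this <;> simp <;> rintro rfl <;> omega
    simp [h0]

def shE (b : Bool) (p : Pos) : SEdge :=
  if b then ((p.1 + 1, p.2), false) else ((p.1, p.2 + 1), true)
def edgesFrom (g : List Bool) (p : Pos) : Finset SEdge :=
  (tilePosFrom g p).toFinset.biUnion tileEdges
def bdFrom (g : List Bool) (p : Pos) : Finset SEdge :=
  (edgesFrom g p).filter
    (fun e => (tilePosFrom g p).countP (fun q => decide (e ∈ tileEdges q)) = 1)
def vertsFrom (g : List Bool) (p : Pos) : Finset Pos := (edgesFrom g p).biUnion edgeVerts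

lemma shE_mem_left (b : Bool) (p : Pos) : shE b p ∈ tileEdges p := by
  cases b <;> simp [shE, tileEdges]

lemma shE_mem_right (b : Bool) (p : Pos) : shE b p ∈ tileEdges (stepP b p) := by
  cases b <;> simp [shE, stepP, tileEdges]

lemma shared_unique {b : Bool} {g : List Bool} {p q : Pos} {e : SEdge}
    (hq : q ∈ tilePosFrom g (stepP b p))
    (he : e ∈ tileEdges q) (hp : e ∈ tileEdges p) : e = shE b p ∧ q = stepP b p := by
  have hm := tilePos_mono _ _ _ hq
  obtain ⟨⟨x, y⟩, t⟩ := e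
  obtain ⟨a, c⟩ := q
  rw [mem_tileEdges] at he hp
  cases t <;> cases b <;> simp [shE, stepP, Prod.ext_iff] at * <;> omega

lemma countP_tail (b : Bool) (g : List Bool) (p : Pos) {e : SEdge} (hp : e ∈ tileEdges p) :
    List.countP (fun q => decide (e ∈ tileEdges q)) (tilePosFrom g (stepP b p)) =
      if e = shE b p then 1 else 0 := by
  split
  case isTrue h =>
    subst h
    rw [← count_self_tilePos g (stepP b p)]
    apply List.countP_congr
    intro q hq
    simp only [decide_eq_true_iff]
    constructor
    · intro hmem; exact (shared_unique hq hmem (shE_mem_left b p)).2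
    · rintro rfl; exact shE_mem_right b p
  case isFalse h =>
    rw [List.countP_eq_zero]
    intro q hq hmem
    rw [decide_eq_true_iff] at hmem
    exact h (shared_unique hq hmem hp).1

lemma tilePosFrom_nil (p : Pos) : tilePosFrom [] p = [p] := rfl

lemma edgesFrom_nil (p : Pos) : edgesFrom [] p = tileEdges p := by
  unfold edgesFrom; rw [tilePosFrom_nil]; simp

lemma edgesFrom_cons (b : Bool) (g : List Bool) (p : Pos) :
    edgesFrom (b :: g) p = tileEdges p ∪ edgesFrom g (stepP b p) := by
  unfold edgesFrom; rw [tilePosFrom_cons]; simp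

lemma vertsFrom_nil (p : Pos) : vertsFrom [] p = tileVerts p := by
  unfold vertsFrom; rw [edgesFrom_nil]; rfl

lemma vertsFrom_cons (b : Bool) (g : List Bool) (p : Pos) :
    vertsFrom (b :: g) p = tileVerts p ∪ vertsFrom g (stepP b p) := by
  ext v
  simp only [vertsFrom, tileVerts, edgesFrom_cons, Finset.mem_biUnion, Finset.mem_union]
  constructor
  · rintro ⟨e, he | he, hv⟩
    exacts [Or.inl ⟨e, he, hv⟩, Or.inr ⟨e, he, hv⟩]
  · rintro (⟨e, he, hv⟩ | ⟨e, he, hv⟩)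
    exacts [⟨e, Or.inl he, hv⟩, ⟨e, Or.inr he, hv⟩]

lemma bdFrom_nil (p : Pos) : bdFrom [] p = tileEdges p := by
  ext e
  simp [bdFrom, edgesFrom_nil, tilePosFrom]

lemma bdFrom_cons (b : Bool) (g : List Bool) (p : Pos) :
    bdFrom (b :: g) p =
      (tileEdges p \ {shE b p}) ∪ (bdFrom g (stepP b p) \ {shE b p}) := by
  ext e
  by_cases hp : e ∈ tileEdges p
  · have hc := countP_tail b g p hp
    by_cases hsh : e = shE b p
    · rw [hsh] at hc ⊢
      simp only [if_pos rfl] at hc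
      simp [bdFrom, edgesFrom_cons, tilePosFrom_cons, List.countP_cons, hc,
        shE_mem_left, hsh ▸ hp]
    · simp only [if_neg hsh] at hc
      have hnr : e ∉ edgesFrom g (stepP b p) := by
        intro he'
        obtain ⟨q, hq, hq2⟩ := Finset.mem_biUnion.mp he'
        exact hsh (shared_unique (List.mem_toFinset.mp hq) hq2 hp).1
      have hnb : e ∉ bdFrom g (stepP b p) := fun h => hnr (Finset.mem_filter.mp h).1
      simp [bdFrom, edgesFrom_cons, tilePosFrom_cons, List.countP_cons, hc, hp, hsh, hnb]
  · have hne : e ≠ shE b p := fun h => hp (h ▸ shE_mem_left b p)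
    simp [bdFrom, edgesFrom_cons, tilePosFrom_cons, List.countP_cons, hp, hne]

lemma head_mem_tilePosFrom (g : List Bool) (p : Pos) : p ∈ tilePosFrom g p := by
  cases g <;> simp [tilePosFrom_nil, tilePosFrom_cons]

lemma tileEdges_subset_edgesFrom (g : List Bool) (p : Pos) : tileEdges p ⊆ edgesFrom g p := by
  intro e he
  exact Finset.mem_biUnion.mpr ⟨p, List.mem_toFinset.mpr (head_mem_tilePosFrom g p), he⟩

lemma edgeVerts_subset_vertsFrom {g : List Bool} {p : Pos} {e : SEdge}
    (he : e ∈ edgesFrom g p) : edgeVerts e ⊆ vertsFrom g p := by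
  intro v hv; exact Finset.mem_biUnion.mpr ⟨e, he, hv⟩

lemma tileVerts_subset_vertsFrom (g : List Bool) (p : Pos) : tileVerts p ⊆ vertsFrom g p := by
  intro v hv
  obtain ⟨e, he, hv⟩ := Finset.mem_biUnion.mp hv
  exact Finset.mem_biUnion.mpr ⟨e, tileEdges_subset_edgesFrom g p he, hv⟩

lemma mem_tileVerts {v p : Pos} :
    v ∈ tileVerts p ↔ (v.1 = p.1 ∨ v.1 = p.1 + 1) ∧ (v.2 = p.2 ∨ v.2 = p.2 + 1) := by
  obtain ⟨a, b⟩ := v; obtain ⟨x, y⟩ := p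
  constructor
  · intro h
    obtain ⟨e, he, hv⟩ := Finset.mem_biUnion.mp h
    rw [mem_tileEdges] at he; rw [mem_edgeVerts] at hv
    obtain ⟨⟨u, w⟩, t⟩ := e
    cases t <;> simp [Prod.ext_iff] at * <;> omega
  · intro h
    simp only at h
    refine Finset.mem_biUnion.mpr ?_
    rcases h with ⟨h1 | h1, h2 | h2⟩
    · exact ⟨((x, y), true), by rw [mem_tileEdges]; simp, by rw [mem_edgeVerts]; simp [Prod.ext_iff, h1, h2]⟩
    · exact ⟨((x, y), false), by rw [mem_tileEdges]; simp, by rw [mem_edgeVerts]; simp [Prod.ext_iff, h1, h2]⟩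
    · exact ⟨((x, y), true), by rw [mem_tileEdges]; simp, by rw [mem_edgeVerts]; simp [Prod.ext_iff, h1, h2]⟩
    · exact ⟨((x, y + 1), true), by rw [mem_tileEdges]; simp, by rw [mem_edgeVerts]; simp [Prod.ext_iff, h1, h2]⟩

lemma edgeVerts_subset_tileVerts {e : SEdge} {p : Pos} (he : e ∈ tileEdges p) :
    edgeVerts e ⊆ tileVerts p := by
  intro v hv
  rw [mem_tileEdges] at he; rw [mem_edgeVerts] at hv; rw [mem_tileVerts]
  obtain ⟨⟨u, w⟩, t⟩ := e
  cases t <;> simp [Prod.ext_iff] at * <;> omega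

lemma vertsFrom_bound {g : List Bool} {p v : Pos} (h : v ∈ vertsFrom g p) :
    p.1 ≤ v.1 ∧ p.2 ≤ v.2 := by
  obtain ⟨e, he, hv⟩ := Finset.mem_biUnion.mp h
  obtain ⟨q, hq, he2⟩ := Finset.mem_biUnion.mp he
  have hm := tilePos_mono _ _ _ (List.mem_toFinset.mp hq)
  rw [mem_tileEdges] at he2; rw [mem_edgeVerts] at hv
  obtain ⟨⟨u, w⟩, t⟩ := e
  cases t <;> simp [Prod.ext_iff] at * <;> omega

lemma card_filter_two {P : Finset SEdge} {v : Pos} {e1 e2 : SEdge} (hne : e1 ≠ e2)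
    (h : ∀ e, (e ∈ P ∧ v ∈ edgeVerts e) ↔ (e = e1 ∨ e = e2)) :
    (P.filter (fun e => v ∈ edgeVerts e)).card = 2 := by
  have : P.filter (fun e => v ∈ edgeVerts e) = {e1, e2} := by
    ext e
    simp only [Finset.mem_filter, Finset.mem_insert, Finset.mem_singleton]
    exact h e
  rw [this, Finset.card_pair hne]

lemma card_filter_one {P : Finset SEdge} {v : Pos} {e1 : SEdge}
    (h : ∀ e, (e ∈ P ∧ v ∈ edgeVerts e) ↔ e = e1) :
    (P.filter (fun e => v ∈ edgeVerts e)).card = 1 := by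
  have : P.filter (fun e => v ∈ edgeVerts e) = {e1} := by
    ext e
    simp only [Finset.mem_filter, Finset.mem_singleton]
    exact h e
  rw [this, Finset.card_singleton]

lemma card_filter_zero {P : Finset SEdge} {v : Pos}
    (h : ∀ e ∈ P, v ∉ edgeVerts e) :
    (P.filter (fun e => v ∈ edgeVerts e)).card = 0 := by
  rw [Finset.card_eq_zero, Finset.filter_eq_empty_iff]
  exact h

lemma tile_deg_two {p v : Pos} (hv : v ∈ tileVerts p) :
    ((tileEdges p).filter (fun e => v ∈ edgeVerts e)).card = 2 := by
  rw [mem_tileVerts] at hv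
  obtain ⟨a, b⟩ := v; obtain ⟨x, y⟩ := p
  simp only at hv
  obtain ⟨h1 | h1, h2 | h2⟩ := hv
  · refine card_filter_two (e1 := ((x, y), true)) (e2 := ((x, y), false)) (by simp) ?_
    intro e; obtain ⟨⟨u, w⟩, t⟩ := e; rw [mem_tileEdges, mem_edgeVerts]
    cases t <;> simp [Prod.ext_iff, h1, h2] <;> omega
  · refine card_filter_two (e1 := ((x, y), false)) (e2 := ((x, y + 1), true)) (by simp) ?_
    intro e; obtain ⟨⟨u, w⟩, t⟩ := e; rw [mem_tileEdges, mem_edgeVerts]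
    cases t <;> simp [Prod.ext_iff, h1, h2] <;> omega
  · refine card_filter_two (e1 := ((x, y), true)) (e2 := ((x + 1, y), false)) (by simp) ?_
    intro e; obtain ⟨⟨u, w⟩, t⟩ := e; rw [mem_tileEdges, mem_edgeVerts]
    cases t <;> simp [Prod.ext_iff, h1, h2] <;> omega
  · refine card_filter_two (e1 := ((x + 1, y), false)) (e2 := ((x, y + 1), true)) (by simp) ?_
    intro e; obtain ⟨⟨u, w⟩, t⟩ := e; rw [mem_tileEdges, mem_edgeVerts]
    cases t <;> simp [Prod.ext_iff, h1, h2] <;> omega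

lemma filter_sdiff_single_card (A : Finset SEdge) {s : SEdge} (hs : s ∈ A) (v : Pos) :
    ((A \ {s}).filter (fun e => v ∈ edgeVerts e)).card
      = (A.filter (fun e => v ∈ edgeVerts e)).card - (if v ∈ edgeVerts s then 1 else 0) := by
  rw [Finset.sdiff_singleton_eq_erase, Finset.filter_erase]
  by_cases h : v ∈ edgeVerts s
  · rw [Finset.card_erase_of_mem (Finset.mem_filter.mpr ⟨hs, h⟩), if_pos h]
  · rw [Finset.erase_eq_of_notMem
      (show s ∉ Finset.filter (fun e => v ∈ edgeVerts e) A from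
        fun hm => h (Finset.mem_filter.mp hm).2), if_neg h, Nat.sub_zero]

lemma shE_mem_bd (b : Bool) (g : List Bool) (p : Pos) : shE b p ∈ bdFrom g (stepP b p) := by
  refine Finset.mem_filter.mpr ⟨tileEdges_subset_edgesFrom g _ (shE_mem_right b p), ?_⟩
  rw [countP_tail b g p (shE_mem_left b p), if_pos rfl]

lemma shared_vert {b : Bool} {g : List Bool} {p v : Pos} (h1 : v ∈ tileVerts p)
    (h2 : v ∈ vertsFrom g (stepP b p)) : v ∈ edgeVerts (shE b p) := by
  rw [mem_tileVerts] at h1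
  have h3 := vertsFrom_bound h2
  rw [mem_edgeVerts]
  obtain ⟨a, c⟩ := v; obtain ⟨x, y⟩ := p
  cases b <;> simp [stepP, shE, Prod.ext_iff] at * <;> omega

lemma bd_deg_two : ∀ (g : List Bool) (p : Pos), ∀ v ∈ vertsFrom g p,
    ((bdFrom g p).filter (fun e => v ∈ edgeVerts e)).card = 2
  | [], p, v, hv => by rw [bdFrom_nil]; exact tile_deg_two (by rwa [vertsFrom_nil] at hv)
  | b :: g, p, v, hv => by
    have hdXY : Disjoint (tileEdges p \ {shE b p}) (bdFrom g (stepP b p) \ {shE b p}) := by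
      rw [Finset.disjoint_left]
      rintro e he1 he2
      rw [Finset.mem_sdiff, Finset.mem_singleton] at he1 he2
      obtain ⟨q, hq, hq2⟩ := Finset.mem_biUnion.mp (Finset.mem_filter.mp he2.1).1
      exact he1.2 (shared_unique (List.mem_toFinset.mp hq) hq2 he1.1).1
    rw [bdFrom_cons, Finset.filter_union,
      Finset.card_union_of_disjoint (Finset.disjoint_filter_filter hdXY),
      filter_sdiff_single_card _ (shE_mem_left b p) v,
      filter_sdiff_single_card _ (shE_mem_bd b g p) v]
    by_cases hsh : v ∈ edgeVerts (shE b p)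
    · have hvt : v ∈ tileVerts p := edgeVerts_subset_tileVerts (shE_mem_left b p) hsh
      have hvr : v ∈ vertsFrom g (stepP b p) :=
        tileVerts_subset_vertsFrom g _ (edgeVerts_subset_tileVerts (shE_mem_right b p) hsh)
      rw [tile_deg_two hvt, bd_deg_two g _ v hvr, if_pos hsh]
    · rw [if_neg hsh]
      by_cases hvr : v ∈ vertsFrom g (stepP b p)
      · have hvt : v ∉ tileVerts p := fun h => hsh (shared_vert h hvr)
        rw [card_filter_zero (fun e he hve =>
          hvt (edgeVerts_subset_tileVerts he hve)), bd_deg_two g _ v hvr]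
      · have hvt : v ∈ tileVerts p := by
          rw [vertsFrom_cons, Finset.mem_union] at hv
          tauto
        rw [tile_deg_two hvt, card_filter_zero (P := bdFrom g (stepP b p))
          (fun e he hve => hvr
            (edgeVerts_subset_vertsFrom (Finset.mem_filter.mp he).1 hve))]

def botE (p : Pos) : SEdge := (p, true)
def lftE (p : Pos) : SEdge := (p, false)
def rgtE (p : Pos) : SEdge := ((p.1 + 1, p.2), false)
def topE (p : Pos) : SEdge := ((p.1, p.2 + 1), true)
def entE (p : Pos) (d : Bool) : SEdge := if d then (p, false) else (p, true)

def tileMin (p : Pos) (d c : Bool) (n : Option Bool) : Finset SEdge :=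
  match d, c, n with
  | true,  true,  some true  => ∅
  | true,  true,  _          => {rgtE p}
  | true,  false, some false => {botE p}
  | true,  false, _          => {botE p, topE p}
  | false, true,  some false => ∅
  | false, true,  _          => {topE p}
  | false, false, some true  => {lftE p}
  | false, false, _          => {lftE p, rgtE p}

def minFrom : List Bool → Pos → Bool → Bool → Finset SEdge
  | [], p, d, c => tileMin p d c none
  | b :: g, p, d, c =>
      tileMin p d c (some b) ∪ minFrom g (stepP b p) b (if b = d then !c else c)

lemma entE_eq_shE (b : Bool) (p : Pos) : entE (stepP b p) b = shE b p := by
  cases b <;> rfl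

lemma edge_base_bound {g : List Bool} {p : Pos} {e : SEdge} (h : e ∈ edgesFrom g p) :
    p.1 ≤ e.1.1 ∧ p.2 ≤ e.1.2 := by
  obtain ⟨q, hq, he⟩ := Finset.mem_biUnion.mp h
  have hm := tilePos_mono _ _ _ (List.mem_toFinset.mp hq)
  rw [mem_tileEdges] at he
  obtain ⟨⟨u, w⟩, t⟩ := e
  cases t <;> simp at * <;> omega

lemma entE_mem_tile (p : Pos) (d : Bool) : entE p d ∈ tileEdges p := by
  cases d <;> simp [entE, tileEdges]

lemma card_filter_single {Q : SEdge → Prop} [DecidablePred Q] (E : SEdge) :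
    (({E} : Finset SEdge).filter Q).card = if Q E then 1 else 0 := by
  rw [Finset.filter_singleton]; split_ifs <;> simp

lemma card_filter_pair {Q : SEdge → Prop} [DecidablePred Q] {E1 E2 : SEdge} (h : E1 ≠ E2) :
    (({E1, E2} : Finset SEdge).filter Q).card
      = (if Q E1 then 1 else 0) + (if Q E2 then 1 else 0) := by
  rw [Finset.filter_insert, Finset.filter_singleton]
  split_ifs <;>
    simp_all [Finset.card_insert_of_notMem, Finset.mem_singleton, h]

set_option maxHeartbeats 2000000 in
theorem minSpec : ∀ (g : List Bool) (p : Pos) (d c : Bool),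
    (minFrom g p d c ⊆ bdFrom g p \ {entE p d}) ∧
    (∀ v ∈ vertsFrom g p,
      ((minFrom g p d c).filter (fun e => v ∈ edgeVerts e)).card =
        (if c = true ∧ v ∈ edgeVerts (entE p d) then 0 else 1))
  | [], p, d, c => by
    constructor
    · rw [bdFrom_nil]
      intro e he
      rw [Finset.mem_sdiff, Finset.mem_singleton]
      obtain ⟨⟨u, w⟩, t⟩ := e
      rw [mem_tileEdges]
      obtain ⟨x, y⟩ := p
      cases d <;> cases c <;> cases t <;>
        simp [minFrom, tileMin, botE, topE, lftE, rgtE, entE, Prod.ext_iff] at he ⊢ <;>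
        try omega
    · intro v hv
      rw [vertsFrom_nil, mem_tileVerts] at hv
      obtain ⟨a, z⟩ := v; obtain ⟨x, y⟩ := p
      simp only at hv
      cases d <;> cases c <;> simp only [minFrom, tileMin] <;>
        (first
          | rw [card_filter_single]
          | rw [card_filter_pair (by simp [botE, topE, lftE, rgtE, Prod.ext_iff]; try omega)]) <;>
        split_ifs <;>
        (try simp_all [edgeVerts, entE, botE, topE, lftE, rgtE, Prod.ext_iff]) <;>
        (try omega)
  | b :: g, p, d, c => by
    obtain ⟨IHsub, IHdeg⟩ := minSpec g (stepP b p) b (if b = d then !c else c)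
    rw [entE_eq_shE] at IHsub IHdeg
    have hSsub : tileMin p d c (some b) ⊆ tileEdges p \ {shE b p} := by
      clear IHsub IHdeg
      intro e he
      rw [Finset.mem_sdiff, Finset.mem_singleton]
      obtain ⟨⟨u, w⟩, t⟩ := e
      rw [mem_tileEdges]
      obtain ⟨x, y⟩ := p
      cases d <;> cases c <;> cases b <;> cases t <;>
        simp [tileMin, botE, topE, lftE, rgtE, shE, Prod.ext_iff] at he ⊢ <;> try omega
    have hS_ent : ∀ e ∈ tileMin p d c (some b), e ≠ entE p d := by
      clear IHsub IHdeg hSsub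
      intro e he
      obtain ⟨⟨u, w⟩, t⟩ := e
      obtain ⟨x, y⟩ := p
      cases d <;> cases c <;> cases b <;> cases t <;>
        simp [tileMin, botE, topE, lftE, rgtE, entE, Prod.ext_iff] at he ⊢ <;> try omega
    have hR_ent : ∀ e ∈ minFrom g (stepP b p) b (if b = d then !c else c), e ≠ entE p d := by
      intro e he heq
      have h2 := IHsub he
      rw [Finset.mem_sdiff] at h2
      have hb := edge_base_bound (Finset.mem_filter.mp h2.1).1
      obtain ⟨x, y⟩ := p
      subst heq
      cases d <;> cases b <;> simp [entE, stepP] at hb <;> omega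
    have hdisjSR : Disjoint (tileMin p d c (some b))
        (minFrom g (stepP b p) b (if b = d then !c else c)) := by
      rw [Finset.disjoint_left]
      intro e heS heR
      have h1 := hSsub heS; rw [Finset.mem_sdiff, Finset.mem_singleton] at h1
      have h2 := IHsub heR; rw [Finset.mem_sdiff, Finset.mem_singleton] at h2
      obtain ⟨q, hq, hq2⟩ := Finset.mem_biUnion.mp (Finset.mem_filter.mp h2.1).1
      exact h1.2 (shared_unique (List.mem_toFinset.mp hq) hq2 h1.1).1
    constructor
    · intro e he
      simp only [minFrom, Finset.mem_union] at he
      rw [Finset.mem_sdiff, Finset.mem_singleton, bdFrom_cons, Finset.mem_union]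
      rcases he with he | he
      · exact ⟨Or.inl (hSsub he), hS_ent e he⟩
      · exact ⟨Or.inr (IHsub he), hR_ent e he⟩
    · intro v hv
      simp only [minFrom]
      rw [Finset.filter_union,
        Finset.card_union_of_disjoint (Finset.disjoint_filter_filter hdisjSR)]
      by_cases hvr : v ∈ vertsFrom g (stepP b p)
      · rw [IHdeg v hvr]
        by_cases hsh : v ∈ edgeVerts (shE b p)
        · clear IHsub IHdeg hSsub hS_ent hR_ent hdisjSR hv hvr
          obtain ⟨a, z⟩ := v; obtain ⟨x, y⟩ := p
          cases d <;> cases c <;> cases b <;> simp only [tileMin] <;>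
            (first
              | rw [card_filter_single]
              | rw [card_filter_pair (by simp [botE, topE, lftE, rgtE, Prod.ext_iff]; try omega)]
              | skip) <;>
            (simp [Finset.filter_empty, mem_edgeVerts, entE, shE, stepP, botE, topE, lftE,
              rgtE, Prod.ext_iff] at hsh ⊢) <;>
            (try split_ifs) <;> (try omega)
        · have hvt : v ∉ tileVerts p := fun h => hsh (shared_vert h hvr)
          have hent : v ∉ edgeVerts (entE p d) :=
            fun h => hvt (edgeVerts_subset_tileVerts (entE_mem_tile p d) h)
          rw [card_filter_zero (fun e he hve =>
              hvt (edgeVerts_subset_tileVerts (Finset.mem_sdiff.mp (hSsub he)).1 hve)),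
            if_neg (fun h => hsh h.2), if_neg (fun h => hent h.2)]
      · have hvt : v ∈ tileVerts p := by
          rw [vertsFrom_cons, Finset.mem_union] at hv; tauto
        have hsh : v ∉ edgeVerts (shE b p) := fun h =>
          hvr (tileVerts_subset_vertsFrom _ _ (edgeVerts_subset_tileVerts (shE_mem_right b p) h))
        rw [card_filter_zero (fun e he hve => hvr (edgeVerts_subset_vertsFrom
            (Finset.mem_filter.mp (Finset.mem_sdiff.mp (IHsub he)).1).1 hve))]
        rw [mem_tileVerts] at hvt
        clear IHsub IHdeg hSsub hS_ent hR_ent hdisjSR hv hvr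
        obtain ⟨a, z⟩ := v; obtain ⟨x, y⟩ := p
        simp only at hvt
        cases d <;> cases c <;> cases b <;> simp only [tileMin] <;>
          (first
            | rw [card_filter_single]
            | rw [card_filter_pair (by simp [botE, topE, lftE, rgtE, Prod.ext_iff]; try omega)]
            | skip) <;>
          (simp [Finset.filter_empty, mem_edgeVerts, entE, shE, stepP, botE, topE, lftE,
            rgtE, Prod.ext_iff] at hsh ⊢) <;>
          (try split_ifs) <;> (try omega)

lemma botE_mem_minFrom (g : List Bool) (p : Pos) : botE p ∈ minFrom g p true false := by
  cases g with
  | nil => simp [minFrom, tileMin]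
  | cons b g =>
    cases b <;> simp [minFrom, tileMin]

lemma exists_unique_of_filter_card_one {P : Finset SEdge} {v : Pos}
    (h : (P.filter (fun e => v ∈ edgeVerts e)).card = 1) :
    ∃! e, e ∈ P ∧ v ∈ edgeVerts e := by
  obtain ⟨a, ha⟩ := Finset.card_eq_one.mp h
  have hm : ∀ e, e ∈ P.filter (fun e => v ∈ edgeVerts e) ↔ e = a := by
    intro e; rw [ha, Finset.mem_singleton]
  exact ⟨a, Finset.mem_filter.mp ((hm a).mpr rfl),
    fun e he => (hm e).mp (Finset.mem_filter.mpr he)⟩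


/-- In any snake graph, the set of boundary edges decomposes as the disjoint union of two
perfect matchings: the minimal perfect matching `Pmin` (the boundary matching containing
the bottom edge of the first tile) and the maximal perfect matching `Pmax`; in particular
`Pmin ∪ Pmax` is the set of all boundary edges and `Pmin ∩ Pmax = ∅`. -/
theorem boundary_decomposes_into_min_and_max_matching (g : List Bool) :
    ∃ Pmin Pmax : Finset SEdge,
      IsMinPM g Pmin ∧
      IsPM (snakeEdges g) Pmax ∧ Pmax = boundary g \ Pmin ∧
      Pmin ∪ Pmax = boundary g ∧ Pmin ∩ Pmax = ∅ := by
  classical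
  obtain ⟨hsub, hdeg⟩ := minSpec g (0, 0) true false
  set Pmin := minFrom g (0, 0) true false with hPmin
  have hBd : boundary g = bdFrom g (0, 0) := rfl
  have hEdges : snakeEdges g = edgesFrom g (0, 0) := rfl
  have hPminBd : Pmin ⊆ boundary g := by
    rw [hBd]; intro e he; exact (Finset.mem_sdiff.mp (hsub he)).1
  have hBdE : boundary g ⊆ snakeEdges g := Finset.filter_subset _ _
  have hPminE : Pmin ⊆ snakeEdges g := fun e he => hBdE (hPminBd he)
  have hVerts : (snakeEdges g).biUnion edgeVerts = vertsFrom g (0, 0) := rfl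
  have hdeg1 : ∀ v ∈ vertsFrom g (0, 0),
      (Pmin.filter (fun e => v ∈ edgeVerts e)).card = 1 := by
    intro v hv
    rw [hdeg v hv, if_neg (by simp)]
  refine ⟨Pmin, boundary g \ Pmin, ⟨⟨hPminE, ?_⟩, hPminBd, botE_mem_minFrom g (0, 0)⟩,
    ⟨fun e he => hBdE (Finset.mem_sdiff.mp he).1, ?_⟩, rfl,
    Finset.union_sdiff_of_subset hPminBd, Finset.inter_sdiff_self _ _⟩
  · intro v hv
    rw [hVerts] at hv
    exact exists_unique_of_filter_card_one (hdeg1 v hv)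
  · intro v hv
    rw [hVerts] at hv
    refine exists_unique_of_filter_card_one ?_
    have hsplit : (boundary g \ Pmin).filter (fun e => v ∈ edgeVerts e)
        = ((boundary g).filter (fun e => v ∈ edgeVerts e)) \
          (Pmin.filter (fun e => v ∈ edgeVerts e)) := by
      ext e
      simp only [Finset.mem_filter, Finset.mem_sdiff]
      tauto
    rw [hsplit, Finset.card_sdiff_of_subset (Finset.filter_subset_filter _ hPminBd)]
    rw [hdeg1 v hv, hBd, bd_deg_two g (0, 0) v hv]
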